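/- arXiv:2301.09335 — 3 statements merged into one kernel-verified Lean document; each statement's English description precedes it below -/
import Mathlib

section
/- If z₁ = 1/2 - sin(2π/9)/√3 and z₂ = 1/2 - sin(2π/9 + 2π/3)/√3, then z₂ = 1/(8 sin²(2π/9)). -/
theorem root_identity (z₁ z₂ : ℝ)
    (h1 : z₁ = 1/2 - Real.sin (2*Real.pi/9) / Real.sqrt 3)
    (h2 : z₂ = 1/2 - Real.sin (2*Real.pi/9 + 2*Real.pi/3) / Real.sqrt 3) :
    z₂ = 1 / (8 * (Real.sin (2*Real.pi/9))^2) := by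
  have h3 : (0:ℝ) < Real.sqrt 3 := by positivity
  have h3sq : Real.sqrt 3 ^ 2 = 3 := Real.sq_sqrt (by norm_num)
  set θ : ℝ := 2*Real.pi/9 with hθ
  have hpi := Real.pi_pos
  have hspos : 0 < Real.sin θ := by
    apply Real.sin_pos_of_pos_of_lt_pi
    · rw [hθ]; linarith
    · rw [hθ]; linarith
  have hsin23 : Real.sin (2*Real.pi/3) = Real.sqrt 3 / 2 := by
    have h : 2*Real.pi/3 = Real.pi - Real.pi/3 := by ring
    rw [h, Real.sin_pi_sub, Real.sin_pi_div_three]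
  have hcos23 : Real.cos (2*Real.pi/3) = -(1/2) := by
    have h : 2*Real.pi/3 = Real.pi - Real.pi/3 := by ring
    rw [h, Real.cos_pi_sub, Real.cos_pi_div_three]
  have h3θ : 3*θ = 2*Real.pi/3 := by rw [hθ]; ring
  have hs : 3 * Real.sin θ - 4 * Real.sin θ ^ 3 = Real.sqrt 3 / 2 := by
    have h := Real.sin_three_mul θ
    rw [h3θ, hsin23] at h; linarith
  have hp : Real.sin θ ^ 2 + Real.cos θ ^ 2 = 1 := Real.sin_sq_add_cos_sq θ
  -- key: √3 sin θ - cos θ = 2 cos 2θ = 2 - 4 sin² θ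
  have hkey2 : Real.sqrt 3 * Real.sin θ - Real.cos θ = 2 - 4 * Real.sin θ ^ 2 := by
    have e : θ - Real.pi/6 = Real.pi/2 - 2*θ := by rw [hθ]; ring
    have e1 : Real.sin (θ - Real.pi/6) = Real.cos (2*θ) := by
      rw [e, Real.sin_pi_div_two_sub]
    rw [Real.sin_sub, Real.sin_pi_div_six, Real.cos_pi_div_six, Real.cos_two_mul] at e1
    nlinarith [e1, hp]
  rw [h2, Real.sin_add, hsin23, hcos23]
  have hsne : Real.sin θ ≠ 0 := ne_of_gt hspos
  have h3ne : Real.sqrt 3 ≠ 0 := ne_of_gt h3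
  field_simp
  linear_combination (8 * Real.sqrt 3 * Real.sin θ + 4) * hs
    + (8 * Real.sqrt 3 * Real.sin θ ^ 2) * hkey2
    + (4 * Real.sin θ - 8 * Real.sin θ ^ 3) * h3sq
end

section
/- With c₂ = 1/2 - sin(2π/9)/√3 and c₃ = 1/2 - sin(π/9)/√3, the identity c₃ = c₂(1 - c₂)/(1/2 - c₂) holds. -/
theorem c3_of_c2 (c₂ c₃ : ℝ)
    (h2 : c₂ = 1/2 - Real.sin (2*Real.pi/9) / Real.sqrt 3)
    (h3 : c₃ = 1/2 - Real.sin (Real.pi/9) / Real.sqrt 3) :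
    c₃ = c₂ * (1 - c₂) / (1/2 - c₂) := by
  set s := Real.sin (Real.pi/9) with hs
  set c := Real.cos (Real.pi/9) with hcdef
  have hpi := Real.pi_pos
  have h2s : Real.sin (2*Real.pi/9) = 2 * s * c := by
    rw [show 2*Real.pi/9 = 2*(Real.pi/9) by ring, Real.sin_two_mul]
  have hc3 : 4*c^3 - 3*c = 1/2 := by
    have := Real.cos_three_mul (Real.pi/9)
    rw [show 3*(Real.pi/9) = Real.pi/3 by ring, Real.cos_pi_div_three] at this
    linarith
  have hs3 : 3*s - 4*s^3 = Real.sqrt 3 / 2 := by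
    have := Real.sin_three_mul (Real.pi/9)
    rw [show 3*(Real.pi/9) = Real.pi/3 by ring, Real.sin_pi_div_three] at this
    linarith
  have hsq : s^2 + c^2 = 1 := Real.sin_sq_add_cos_sq _
  have hspos : 0 < s := Real.sin_pos_of_pos_of_lt_pi (by linarith) (by linarith)
  have hcpos : 0 < c := Real.cos_pos_of_mem_Ioo ⟨by linarith, by linarith⟩
  have hr3 : Real.sqrt 3 ^ 2 = 3 := Real.sq_sqrt (by norm_num)
  have hr3pos : (0:ℝ) < Real.sqrt 3 := Real.sqrt_pos.mpr (by norm_num)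
  rw [h2, h3, h2s]
  have hden : (1/2 : ℝ) - (1/2 - 2*s*c / Real.sqrt 3) = 2*s*c / Real.sqrt 3 := by ring
  have key : 4*s^2*c^2 + Real.sqrt 3 * s * c - 2*s^2*c = 3/4 := by
    linear_combination (-2*s*c)*hs3 + (4*c^2+4*c-8*c*s^2-8*c+8*c^3)*hsq + (-2*c^2-c+3/2)*hc3
  field_simp
  linear_combination 4*key - hr3
end

section
/- For the 8-stage method of eq. (3) with c₂ = 1/2 - sin(2π/9)/√3, c₃ = 1/2 - sin(π/9)/√3, the order-4 conditions hold: b·𝟙 = 1, b·c = 1/2, b·c² = 1/3, b·(Ac) = 1/6, b·c³ = 1/4, b·(c∘(Ac)) = 1/8, b·(Ac²) = 1/12, b·(A²c) = 1/24. -/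
open Matrix

noncomputable def c₂ : ℝ := 1/2 - Real.sin (2*Real.pi/9) / Real.sqrt 3
noncomputable def c₃ : ℝ := 1/2 - Real.sin (Real.pi/9) / Real.sqrt 3

noncomputable def c8 : Fin 8 → ℝ := ![0, c₂, c₃, 1/2, 1/2, 1-c₃, 1-c₂, 1]

noncomputable def b8 : Fin 8 → ℝ :=
  ![c₂/2, c₃/2, 1/4-c₂, 0, 1/2+c₂-c₃, 1/4-c₂, c₃/2, c₂/2]

noncomputable def A8 : Matrix (Fin 8) (Fin 8) ℝ :=
  !![0,        0,           0,          0,        0,           0,        0,   0;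
     c₂,       0,           0,          0,        0,           0,        0,   0;
     0,        c₃,          0,          0,        0,           0,        0,   0;
     1/2-c₂,   c₂+c₃-1,     1-c₃,       0,        0,           0,        0,   0;
     2*c₂*c₃,  (1-2*c₃)*c₃, (1-4*c₂)*c₃, 4*c₂*c₃, 0,           0,        0,   0;
     0,        c₃,          0,          4*c₂-2,   1/(2*c₂)-2,  0,        0,   0;
     c₂,       0,           1/2-2*c₂,   2-4*c₂,   6*c₂-2,      1/2-2*c₂, 0,   0;
     0,        c₃,          0,          4*c₂-2,   1/(2*c₂)-2,  0,        c₃,  0]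

lemma cubic_x2 : 24*(Real.sin (2*Real.pi/9) / Real.sqrt 3)^3 - 6*(Real.sin (2*Real.pi/9) / Real.sqrt 3) + 1 = 0 := by
  have h3 : Real.sqrt 3 * Real.sqrt 3 = 3 := Real.mul_self_sqrt (by norm_num)
  have hne : Real.sqrt 3 ≠ 0 := by positivity
  have ht : Real.sin (3 * (2*Real.pi/9)) = 3 * Real.sin (2*Real.pi/9) - 4 * Real.sin (2*Real.pi/9)^3 := Real.sin_three_mul _
  have he : 3 * (2*Real.pi/9) = Real.pi - Real.pi/3 := by ring
  rw [he, Real.sin_pi_sub, Real.sin_pi_div_three] at ht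
  field_simp
  linear_combination (Real.sqrt 3 - 6*Real.sin (2*Real.pi/9)) * h3 + 6 * ht

lemma linrel : Real.sin (Real.pi/9)/Real.sqrt 3 - 6*(Real.sin (2*Real.pi/9)/Real.sqrt 3)^2 - Real.sin (2*Real.pi/9)/Real.sqrt 3 + 1 = 0 := by
  have h3 : Real.sqrt 3 * Real.sqrt 3 = 3 := Real.mul_self_sqrt (by norm_num)
  have hne : Real.sqrt 3 ≠ 0 := by positivity
  have sq : Real.sin (2*Real.pi/9)^2 = 1/2 - Real.cos (4*Real.pi/9)/2 := by
    have h := Real.cos_two_mul (2*Real.pi/9)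
    have p := Real.sin_sq_add_cos_sq (2*Real.pi/9)
    rw [show (4*Real.pi/9) = 2*(2*Real.pi/9) by ring]
    linarith
  have c1 : Real.cos (4*Real.pi/9) = Real.sin (Real.pi/18) := by
    rw [show (4*Real.pi/9) = Real.pi/2 - Real.pi/18 by ring, Real.cos_pi_div_two_sub]
  have s2 : Real.sin (2*Real.pi/9) = 1/2 * Real.cos (Real.pi/18) + Real.sqrt 3/2 * Real.sin (Real.pi/18) := by
    rw [show (2*Real.pi/9) = Real.pi/6 + Real.pi/18 by ring, Real.sin_add, Real.sin_pi_div_six, Real.cos_pi_div_six]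
  have s1 : Real.sin (Real.pi/9) = 1/2 * Real.cos (Real.pi/18) - Real.sqrt 3/2 * Real.sin (Real.pi/18) := by
    rw [show (Real.pi/9) = Real.pi/6 - Real.pi/18 by ring, Real.sin_sub, Real.sin_pi_div_six, Real.cos_pi_div_six]
  have hinv : Real.sqrt 3 * (Real.sqrt 3)⁻¹ = 1 := mul_inv_cancel₀ hne
  linear_combination ((Real.sqrt 3)⁻¹)^2 * (Real.sqrt 3 * s1 - Real.sqrt 3 * s2 - 6*sq + 3*c1 + (1 - Real.sin (Real.pi/18))*h3) + (-(Real.sin (Real.pi/9) - Real.sin (2*Real.pi/9))*(Real.sqrt 3)⁻¹ - 1 - Real.sqrt 3 * (Real.sqrt 3)⁻¹) * hinv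

theorem eight_stage_order_four :
    (∑ i, b8 i) = 1 ∧
    (∑ i, b8 i * c8 i) = 1/2 ∧
    (∑ i, b8 i * (c8 i)^2) = 1/3 ∧
    (∑ i, b8 i * (A8.mulVec c8) i) = 1/6 ∧
    (∑ i, b8 i * (c8 i)^3) = 1/4 ∧
    (∑ i, b8 i * (c8 i * (A8.mulVec c8) i)) = 1/8 ∧
    (∑ i, b8 i * (A8.mulVec (fun j => (c8 j)^2)) i) = 1/12 ∧
    (∑ i, b8 i * (A8.mulVec (A8.mulVec c8)) i) = 1/24 := by
  have ex2 : (1/2 - c₂ : ℝ) = Real.sin (2*Real.pi/9) / Real.sqrt 3 := by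
    unfold c₂; ring
  have ex3 : (1/2 - c₃ : ℝ) = Real.sin (Real.pi/9) / Real.sqrt 3 := by
    unfold c₃; ring
  have h2 : 24*(1/2-c₂)^3 - 6*(1/2-c₂) + 1 = 0 := by rw [ex2]; exact cubic_x2
  have hL : (1/2-c₃) - 6*(1/2-c₂)^2 - (1/2-c₂) + 1 = 0 := by
    rw [ex2, ex3]; exact linrel
  have hc2 : c₂ ≠ 0 := by
    intro h
    rw [h] at h2
    norm_num at h2
  have hG : c₂ * (1/(2*c₂)) = 1/2 := by
    field_simp
  refine ⟨?_, ?_, ?_, ?_, ?_, ?_, ?_, ?_⟩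
  · simp [b8, c8, A8, Matrix.mulVec, dotProduct, Fin.sum_univ_succ, Matrix.cons_val_zero, Matrix.cons_val_succ]
    ring
  · simp [b8, c8, A8, Matrix.mulVec, dotProduct, Fin.sum_univ_succ, Matrix.cons_val_zero, Matrix.cons_val_succ]
    ring
  · simp [b8, c8, A8, Matrix.mulVec, dotProduct, Fin.sum_univ_succ, Matrix.cons_val_zero, Matrix.cons_val_succ]
    linear_combination ((1/2:ℝ) + (-1/2:ℝ)*c₃ + (-11/2:ℝ)*c₂ + (2:ℝ)*c₂*c₃ + (16:ℝ)*c₂^2 + (-12:ℝ)*c₂^3) * hL + ((7/24:ℝ) + (-3:ℝ)*c₂ + (3:ℝ)*c₂^2) * h2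
  · simp [b8, c8, A8, Matrix.mulVec, dotProduct, Fin.sum_univ_succ, Matrix.cons_val_zero, Matrix.cons_val_succ]
    apply mul_left_cancel₀ hc2
    linear_combination ((1/8:ℝ) + (-1/4:ℝ)*c₂) * hG + ((1/4:ℝ)*c₂ + (-1:ℝ)*c₂*c₃ + (1:ℝ)*c₂*c₃^2 + (-33/2:ℝ)*c₂^2 + (15:ℝ)*c₂^2*c₃ + (-6:ℝ)*c₂^2*c₃^2 + (131:ℝ)*c₂^3 + (-42:ℝ)*c₂^3*c₃ + (-402:ℝ)*c₂^4 + (36:ℝ)*c₂^4*c₃ + (504:ℝ)*c₂^5 + (-216:ℝ)*c₂^6) * hL + ((1/16:ℝ) + (1/12:ℝ)*c₂ + (-39/4:ℝ)*c₂^2 + (63:ℝ)*c₂^3 + (-108:ℝ)*c₂^4 + (54:ℝ)*c₂^5) * h2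
  · simp [b8, c8, A8, Matrix.mulVec, dotProduct, Fin.sum_univ_succ, Matrix.cons_val_zero, Matrix.cons_val_succ]
    linear_combination ((3/4:ℝ) + (-3/4:ℝ)*c₃ + (-33/4:ℝ)*c₂ + (3:ℝ)*c₂*c₃ + (24:ℝ)*c₂^2 + (-18:ℝ)*c₂^3) * hL + ((7/16:ℝ) + (-9/2:ℝ)*c₂ + (9/2:ℝ)*c₂^2) * h2
  · simp [b8, c8, A8, Matrix.mulVec, dotProduct, Fin.sum_univ_succ, Matrix.cons_val_zero, Matrix.cons_val_succ]
    apply mul_left_cancel₀ hc2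
    linear_combination ((1/8:ℝ) + (-1/8:ℝ)*c₃ + (-1/4:ℝ)*c₂ + (1/2:ℝ)*c₂*c₃) * hG + ((1/16:ℝ) + (-3/4:ℝ)*c₂ + (-1/2:ℝ)*c₂*c₃ + (1/2:ℝ)*c₂*c₃^2 + (-11/2:ℝ)*c₂^2 + (15/2:ℝ)*c₂^2*c₃ + (-3:ℝ)*c₂^2*c₃^2 + (63:ℝ)*c₂^3 + (-21:ℝ)*c₂^3*c₃ + (-201:ℝ)*c₂^4 + (18:ℝ)*c₂^4*c₃ + (252:ℝ)*c₂^5 + (-108:ℝ)*c₂^6) * hL + ((3/32:ℝ) + (-7/16:ℝ)*c₂ + (-17/4:ℝ)*c₂^2 + (63/2:ℝ)*c₂^3 + (-54:ℝ)*c₂^4 + (27:ℝ)*c₂^5) * h2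
  · simp [b8, c8, A8, Matrix.mulVec, dotProduct, Fin.sum_univ_succ, Matrix.cons_val_zero, Matrix.cons_val_succ]
    apply mul_left_cancel₀ hc2
    linear_combination ((1/16:ℝ) + (-1/8:ℝ)*c₂) * hG + ((-7/8:ℝ)*c₂ + (5/4:ℝ)*c₂*c₃ + (-3/2:ℝ)*c₂*c₃^2 + (1:ℝ)*c₂*c₃^3 + (69/4:ℝ)*c₂^2 + (-35/2:ℝ)*c₂^2*c₃ + (12:ℝ)*c₂^2*c₃^2 + (-4:ℝ)*c₂^2*c₃^3 + (-373/2:ℝ)*c₂^3 + (111:ℝ)*c₂^3*c₃ + (-32:ℝ)*c₂^3*c₃^2 + (1035:ℝ)*c₂^4 + (-306:ℝ)*c₂^4*c₃ + (24:ℝ)*c₂^4*c₃^2 + (-2988:ℝ)*c₂^5 + (360:ℝ)*c₂^5*c₃ + (4428:ℝ)*c₂^6 + (-144:ℝ)*c₂^6*c₃ + (-3168:ℝ)*c₂^7 + (864:ℝ)*c₂^8) * hL + ((1/32:ℝ) + (-11/24:ℝ)*c₂ + (71/8:ℝ)*c₂^2 + (-96:ℝ)*c₂^3 + (444:ℝ)*c₂^4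 + (-861:ℝ)*c₂^5 + (720:ℝ)*c₂^6 + (-216:ℝ)*c₂^7) * h2
  · simp [b8, c8, A8, Matrix.mulVec, dotProduct, Fin.sum_univ_succ, Matrix.cons_val_zero, Matrix.cons_val_succ]
    apply mul_left_cancel₀ hc2
    linear_combination ((1/8:ℝ)*c₃ + (1/4:ℝ)*c₃^2 + (1/4:ℝ)*c₂*c₃ + (-2:ℝ)*c₂*c₃^2 + (-3/2:ℝ)*c₂^2*c₃ + (3:ℝ)*c₂^2*c₃^2) * hG + ((-1/8:ℝ)*c₃ + (1/2:ℝ)*c₂ + (-1:ℝ)*c₂*c₃ + (2:ℝ)*c₂*c₃^2 + (-27/2:ℝ)*c₂^2 + (25/2:ℝ)*c₂^2*c₃ + (-2:ℝ)*c₂^2*c₃^2 + (-4:ℝ)*c₂^2*c₃^3 + (217/2:ℝ)*c₂^3 + (-33:ℝ)*c₂^3*c₃ + (-6:ℝ)*c₂^3*c₃^2 + (-281:ℝ)*c₂^4 + (-38:ℝ)*c₂^4*c₃ + (24:ℝ)*c₂^4*c₃^2 + (-174:ℝ)*c₂^5 + (204:ℝ)*c₂^5*c₃ + (1728:ℝ)*c₂^6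 + (-144:ℝ)*c₂^6*c₃ + (-2232:ℝ)*c₂^7 + (864:ℝ)*c₂^8) * hL + ((5/24:ℝ)*c₂ + (-29/4:ℝ)*c₂^2 + (219/4:ℝ)*c₂^3 + (-54:ℝ)*c₂^4 + (-264:ℝ)*c₂^5 + (486:ℝ)*c₂^6 + (-216:ℝ)*c₂^7) * h2
end
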